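/- Let N ≥ 1, let (a,b) be an open real interval, let A_1, A_0 : (a,b) → Mat_N(ℂ), and let C, U, V ∈ Mat_N(ℂ). Suppose Ψ : (a,b) → Mat_N(ℂ) is twice differentiable, Ψ(x) is invertible for all x ∈ (a,b), and Ψ satisfies the two equations 2x(1−x)·Ψ'(x) + Ψ(x)·A_1(x) = (C − xU)·Ψ(x) and x(1−x)·Ψ''(x) + Ψ'(x)·A_1(x) + Ψ(x)·A_0(x) = −V·Ψ(x) for all x ∈ (a,b). If F : (a,b) → Mat_N(ℂ) is twice differentiable and satisfies x(1−x)·F''(x) + F'(x)·A_1(x) + F(x)·A_0(x) = Λ·F(x) for all x ∈ (a,b) with Λ ∈ Mat_N(ℂ), then Q(x) = F(x)·Ψ(x)^{−1} satisfies the hypergeometric equation x(1−x)·Q''(x) + Q'(x)·(C − xU) − Q(x)·V = Λ·Q(x) for all x ∈ (a,b). -/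

import Mathlib

open Matrix

/-- Entrywise product rule for matrix-valued functions. -/
lemma hasDerivAt_matrix_mul {N : ℕ} {A B : ℝ → Matrix (Fin N) (Fin N) ℂ}
    {A' B' : Matrix (Fin N) (Fin N) ℂ} {x : ℝ}
    (hA : ∀ k l, HasDerivAt (fun t : ℝ => A t k l) (A' k l) x)
    (hB : ∀ k l, HasDerivAt (fun t : ℝ => B t k l) (B' k l) x) (k l : Fin N) :
    HasDerivAt (fun t : ℝ => (A t * B t) k l) ((A' * B x + A x * B') k l) x := by
  simp only [Matrix.mul_apply, Matrix.add_apply, ← Finset.sum_add_distrib]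
  exact HasDerivAt.fun_sum fun j _ => (hA k j).mul (hB j l)

lemma differentiableAt_matrix_det {N : ℕ} {M : ℝ → Matrix (Fin N) (Fin N) ℂ} {x : ℝ}
    (h : ∀ k l, DifferentiableAt ℝ (fun t => M t k l) x) :
    DifferentiableAt ℝ (fun t => (M t).det) x := by
  simp only [Matrix.det_apply']
  exact DifferentiableAt.fun_sum fun σ _ =>
    (DifferentiableAt.fun_finsetProd fun i _ => h (σ i) i).const_mul _

lemma differentiableAt_matrix_inv_entry {N : ℕ} {M : ℝ → Matrix (Fin N) (Fin N) ℂ} {x : ℝ}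
    (h : ∀ k l, DifferentiableAt ℝ (fun t => M t k l) x)
    (hdet : (M x).det ≠ 0) (k l : Fin N) :
    DifferentiableAt ℝ (fun t => (M t)⁻¹ k l) x := by
  have hrw : ∀ t : ℝ, (M t)⁻¹ k l = ((M t).det)⁻¹ * (M t).adjugate k l := by
    intro t
    rw [Matrix.inv_def, Ring.inverse_eq_inv']
    simp [Matrix.smul_apply, smul_eq_mul]
  simp only [hrw]
  refine DifferentiableAt.mul ((differentiableAt_matrix_det h).inv hdet) ?_
  simp only [Matrix.adjugate_apply]
  refine differentiableAt_matrix_det ?_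
  intro i j
  simp only [Matrix.updateRow_apply]
  by_cases hij : i = l
  · simp [hij]
  · simpa [hij] using h i j

/-- First derivative of the inverse. -/
noncomputable def matInvD1 {N : ℕ} (Ψ Ψ' : ℝ → Matrix (Fin N) (Fin N) ℂ) (t : ℝ) :
    Matrix (Fin N) (Fin N) ℂ := -((Ψ t)⁻¹ * Ψ' t * (Ψ t)⁻¹)

/-- Second derivative of the inverse. -/
noncomputable def matInvD2 {N : ℕ} (Ψ Ψ' Ψ'' : ℝ → Matrix (Fin N) (Fin N) ℂ) (t : ℝ) :
    Matrix (Fin N) (Fin N) ℂ :=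
  -((matInvD1 Ψ Ψ' t * Ψ' t + (Ψ t)⁻¹ * Ψ'' t) * (Ψ t)⁻¹ + (Ψ t)⁻¹ * Ψ' t * matInvD1 Ψ Ψ' t)

/-- If `Ψ` is twice differentiable, everywhere invertible on `(a,b)` and
satisfies the two conjugation equations, and `F` satisfies
`x(1-x) F'' + F' A₁ + F A₀ = Λ F`, then `Q = F Ψ⁻¹` satisfies the hypergeometric
equation `x(1-x) Q'' + Q' (C - xU) - Q V = Λ Q` on `(a,b)`. -/
theorem conjugation_to_hypergeometric
    (N : ℕ) (hN : 1 ≤ N) (a b : ℝ)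
    (A1 A0 : ℝ → Matrix (Fin N) (Fin N) ℂ)
    (Cm U V : Matrix (Fin N) (Fin N) ℂ)
    (Ψ Ψ' Ψ'' : ℝ → Matrix (Fin N) (Fin N) ℂ)
    (hΨinv : ∀ x ∈ Set.Ioo a b, IsUnit (Ψ x))
    (hΨd1 : ∀ x ∈ Set.Ioo a b, ∀ k l : Fin N,
      HasDerivAt (fun t : ℝ => Ψ t k l) (Ψ' x k l) x)
    (hΨd2 : ∀ x ∈ Set.Ioo a b, ∀ k l : Fin N,
      HasDerivAt (fun t : ℝ => Ψ' t k l) (Ψ'' x k l) x)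
    (hΨ1 : ∀ x ∈ Set.Ioo a b,
      (2 * (x : ℂ) * (1 - (x : ℂ))) • Ψ' x + Ψ x * A1 x = (Cm - (x : ℂ) • U) * Ψ x)
    (hΨ2 : ∀ x ∈ Set.Ioo a b,
      ((x : ℂ) * (1 - (x : ℂ))) • Ψ'' x + Ψ' x * A1 x + Ψ x * A0 x = -(V * Ψ x))
    (F F' F'' : ℝ → Matrix (Fin N) (Fin N) ℂ)
    (Λ : Matrix (Fin N) (Fin N) ℂ)
    (hFd1 : ∀ x ∈ Set.Ioo a b, ∀ k l : Fin N,
      HasDerivAt (fun t : ℝ => F t k l) (F' x k l) x)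
    (hFd2 : ∀ x ∈ Set.Ioo a b, ∀ k l : Fin N,
      HasDerivAt (fun t : ℝ => F' t k l) (F'' x k l) x)
    (hF : ∀ x ∈ Set.Ioo a b,
      ((x : ℂ) * (1 - (x : ℂ))) • F'' x + F' x * A1 x + F x * A0 x = Λ * F x) :
    ∃ Q' Q'' : ℝ → Matrix (Fin N) (Fin N) ℂ,
      (∀ x ∈ Set.Ioo a b, ∀ k l : Fin N,
        HasDerivAt (fun t : ℝ => (F t * (Ψ t)⁻¹) k l) (Q' x k l) x) ∧
      (∀ x ∈ Set.Ioo a b, ∀ k l : Fin N,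
        HasDerivAt (fun t : ℝ => Q' t k l) (Q'' x k l) x) ∧
      (∀ x ∈ Set.Ioo a b,
        ((x : ℂ) * (1 - (x : ℂ))) • Q'' x + Q' x * (Cm - (x : ℂ) • U)
          - (F x * (Ψ x)⁻¹) * V = Λ * (F x * (Ψ x)⁻¹)) := by
  classical
  have hdet : ∀ y ∈ Set.Ioo a b, IsUnit (Ψ y).det := fun y hy =>
    (Matrix.isUnit_iff_isUnit_det _).mp (hΨinv y hy)
  -- first derivative of the inverse, entrywise
  have hGd : ∀ x ∈ Set.Ioo a b, ∀ k l : Fin N,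
      HasDerivAt (fun t : ℝ => (Ψ t)⁻¹ k l) (matInvD1 Ψ Ψ' x k l) x := by
    intro x hx k l
    have hdiff : ∀ k l : Fin N, DifferentiableAt ℝ (fun t : ℝ => (Ψ t)⁻¹ k l) x := fun k l =>
      differentiableAt_matrix_inv_entry (fun k l => (hΨd1 x hx k l).differentiableAt)
        ((hdet x hx).ne_zero) k l
    set u : Matrix (Fin N) (Fin N) ℂ := fun k l => deriv (fun t : ℝ => (Ψ t)⁻¹ k l) x with hu_def
    have hu : ∀ k l : Fin N, HasDerivAt (fun t : ℝ => (Ψ t)⁻¹ k l) (u k l) x := fun k l =>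
      (hdiff k l).hasDerivAt
    have hprod : ∀ k l : Fin N, HasDerivAt (fun t : ℝ => ((Ψ t)⁻¹ * Ψ t) k l)
        ((u * Ψ x + (Ψ x)⁻¹ * Ψ' x) k l) x := fun k l =>
      hasDerivAt_matrix_mul hu (hΨd1 x hx) k l
    have hone : ∀ k l : Fin N, HasDerivAt (fun t : ℝ => ((Ψ t)⁻¹ * Ψ t) k l) 0 x := by
      intro k l
      refine (hasDerivAt_const x ((1 : Matrix (Fin N) (Fin N) ℂ) k l)).congr_of_eventuallyEq ?_
      filter_upwards [isOpen_Ioo.mem_nhds hx] with t ht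
      rw [Matrix.nonsing_inv_mul _ (hdet t ht)]
    have hzero : u * Ψ x + (Ψ x)⁻¹ * Ψ' x = 0 := by
      ext k l
      simpa using (hprod k l).unique (hone k l)
    have hu' : u = matInvD1 Ψ Ψ' x := by
      have h1 : u * Ψ x = -((Ψ x)⁻¹ * Ψ' x) := eq_neg_of_add_eq_zero_left hzero
      have h2 : u * Ψ x * (Ψ x)⁻¹ = -((Ψ x)⁻¹ * Ψ' x) * (Ψ x)⁻¹ := by rw [h1]
      rw [mul_assoc, Matrix.mul_nonsing_inv _ (hdet x hx), mul_one] at h2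
      rw [h2, matInvD1, neg_mul]
    rw [← hu']
    exact hu k l
  -- second derivative of the inverse, entrywise
  have hGd2 : ∀ x ∈ Set.Ioo a b, ∀ k l : Fin N,
      HasDerivAt (fun t : ℝ => matInvD1 Ψ Ψ' t k l) (matInvD2 Ψ Ψ' Ψ'' x k l) x := by
    intro x hx k l
    have hinner : ∀ k l : Fin N, HasDerivAt (fun t : ℝ => ((Ψ t)⁻¹ * Ψ' t) k l)
        ((matInvD1 Ψ Ψ' x * Ψ' x + (Ψ x)⁻¹ * Ψ'' x) k l) x := fun k l =>
      hasDerivAt_matrix_mul (hGd x hx) (hΨd2 x hx) k l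
    have houter := hasDerivAt_matrix_mul hinner (hGd x hx) k l
    have : HasDerivAt (fun t : ℝ => matInvD1 Ψ Ψ' t k l)
        (-(((matInvD1 Ψ Ψ' x * Ψ' x + (Ψ x)⁻¹ * Ψ'' x) * (Ψ x)⁻¹
            + (Ψ x)⁻¹ * Ψ' x * matInvD1 Ψ Ψ' x) k l)) x := by
      simpa only [matInvD1, Matrix.neg_apply] using houter.fun_neg
    simpa only [matInvD2, Matrix.neg_apply] using this
  refine ⟨fun t => F' t * (Ψ t)⁻¹ + F t * matInvD1 Ψ Ψ' t,
    fun t => (F'' t * (Ψ t)⁻¹ + F' t * matInvD1 Ψ Ψ' t)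
      + (F' t * matInvD1 Ψ Ψ' t + F t * matInvD2 Ψ Ψ' Ψ'' t), ?_, ?_, ?_⟩
  · intro x hx k l
    exact hasDerivAt_matrix_mul (hFd1 x hx) (hGd x hx) k l
  · intro x hx k l
    simp only [Matrix.add_apply]
    exact HasDerivAt.add
      (hasDerivAt_matrix_mul (hFd2 x hx) (hGd x hx) k l)
      (hasDerivAt_matrix_mul (hFd1 x hx) (hGd2 x hx) k l)
  · intro x hx
    have hGψ : (Ψ x)⁻¹ * Ψ x = 1 := Matrix.nonsing_inv_mul _ (hdet x hx)
    have hψG : Ψ x * (Ψ x)⁻¹ = 1 := Matrix.mul_nonsing_inv _ (hdet x hx)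
    have hGψM : ∀ M : Matrix (Fin N) (Fin N) ℂ, (Ψ x)⁻¹ * (Ψ x * M) = M := fun M => by
      rw [← mul_assoc, hGψ, one_mul]
    have hψGM : ∀ M : Matrix (Fin N) (Fin N) ℂ, Ψ x * ((Ψ x)⁻¹ * M) = M := fun M => by
      rw [← mul_assoc, hψG, one_mul]
    have h1 : Cm - (x : ℂ) • U
        = ((2 * (x : ℂ) * (1 - (x : ℂ))) • Ψ' x + Ψ x * A1 x) * (Ψ x)⁻¹ := by
      calc Cm - (x : ℂ) • U = (Cm - (x : ℂ) • U) * (Ψ x * (Ψ x)⁻¹) := by rw [hψG, mul_one]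
        _ = ((2 * (x : ℂ) * (1 - (x : ℂ))) • Ψ' x + Ψ x * A1 x) * (Ψ x)⁻¹ := by
            rw [← mul_assoc, ← hΨ1 x hx]
    have e1 : ((x : ℂ) * (1 - (x : ℂ))) • Ψ'' x + Ψ' x * A1 x
        = -(V * Ψ x) - Ψ x * A0 x := eq_sub_of_add_eq (hΨ2 x hx)
    have hRHS : Λ * (F x * (Ψ x)⁻¹)
        = (((x : ℂ) * (1 - (x : ℂ))) • F'' x + F' x * A1 x + F x * A0 x) * (Ψ x)⁻¹ := by
      rw [hF x hx, mul_assoc]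
    rw [h1, hRHS]
    calc ((x : ℂ) * (1 - (x : ℂ))) • ((F'' x * (Ψ x)⁻¹ + F' x * matInvD1 Ψ Ψ' x)
            + (F' x * matInvD1 Ψ Ψ' x + F x * matInvD2 Ψ Ψ' Ψ'' x))
          + (F' x * (Ψ x)⁻¹ + F x * matInvD1 Ψ Ψ' x)
            * (((2 * (x : ℂ) * (1 - (x : ℂ))) • Ψ' x + Ψ x * A1 x) * (Ψ x)⁻¹)
          - (F x * (Ψ x)⁻¹) * V
        = ((x : ℂ) * (1 - (x : ℂ))) • (F'' x * (Ψ x)⁻¹) + F' x * (A1 x * (Ψ x)⁻¹)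
          - F x * ((Ψ x)⁻¹ * ((((x : ℂ) * (1 - (x : ℂ))) • Ψ'' x + Ψ' x * A1 x) * (Ψ x)⁻¹))
          - F x * ((Ψ x)⁻¹ * V) := by
          simp only [matInvD2, matInvD1, mul_add, add_mul, mul_sub, sub_mul, neg_mul, mul_neg,
            neg_neg, smul_mul_assoc, mul_smul_comm, mul_assoc, smul_add, smul_sub, smul_neg,
            smul_smul, mul_one, one_mul, hGψM, hψGM, hGψ, hψG]
          module
      _ = (((x : ℂ) * (1 - (x : ℂ))) • F'' x + F' x * A1 x + F x * A0 x) * (Ψ x)⁻¹ := by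
          rw [e1]
          simp only [mul_add, add_mul, mul_sub, sub_mul, neg_mul, mul_neg,
            neg_neg, smul_mul_assoc, mul_smul_comm, mul_assoc, smul_add, smul_sub, smul_neg,
            smul_smul, mul_one, one_mul, hGψM, hψGM, hGψ, hψG]
          module
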